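/- The Benjamini–Hochberg procedure at level α applied to p independent p-values, where the p₀ p-values corresponding to true null hypotheses are each uniformly distributed on [0,1], controls the false discovery rate: E[V/max(R,1)] ≤ (p₀/p)·α ≤ α, where R is the number of rejections and V the number of rejected true nulls. -/

import Mathlib

open MeasureTheory ProbabilityTheory

/-- The number of rejections of the Benjamini–Hochberg procedure at level `α` applied
to `m` p-values: the largest `k` such that at least `k` of the p-values are at most
`k·α/m` (equivalently, `P_{(k)} ≤ kα/m`). -/
noncomputable def bhRejections (m : ℕ) (α : ℝ) (pv : Fin m → ℝ) : ℕ :=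
  sSup {k | k ≤ m ∧ k ≤ (Finset.univ.filter fun i => pv i ≤ k * α / m).card}

namespace BHAux

def bhSet (m : ℕ) (α : ℝ) (pv : Fin m → ℝ) : Set ℕ :=
  {k | k ≤ m ∧ k ≤ (Finset.univ.filter fun i => pv i ≤ k * α / m).card}

variable {m : ℕ} {α : ℝ} {pv pv' : Fin m → ℝ} {k : ℕ}

lemma zero_mem : 0 ∈ bhSet m α pv := ⟨Nat.zero_le _, Nat.zero_le _⟩

lemma bddAbove : BddAbove (bhSet m α pv) := ⟨m, fun k hk => hk.1⟩

lemma bh_mem : bhRejections m α pv ∈ bhSet m α pv :=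
  Nat.sSup_mem ⟨0, zero_mem⟩ bddAbove

lemma le_bh (hk : k ∈ bhSet m α pv) : k ≤ bhRejections m α pv :=
  le_csSup bddAbove hk

lemma bh_le_m : bhRejections m α pv ≤ m := bh_mem.1

lemma bh_le_count :
    bhRejections m α pv ≤
      (Finset.univ.filter fun i => pv i ≤ (bhRejections m α pv) * α / m).card :=
  bh_mem.2

lemma bh_mono (h : ∀ i, pv' i ≤ pv i) : bhRejections m α pv ≤ bhRejections m α pv' := by
  refine le_bh ⟨bh_le_m, le_trans bh_le_count (Finset.card_le_card ?_)⟩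
  exact Finset.monotone_filter_right _ fun i _ hi => le_trans (h i) hi

lemma count_update_eq (hα : 0 ≤ α) (i : Fin m) (hik : pv i ≤ k * α / m) :
    (Finset.univ.filter fun j => Function.update pv i 0 j ≤ (k:ℕ) * α / m).card
      = (Finset.univ.filter fun j => pv j ≤ (k:ℕ) * α / m).card := by
  congr 1
  ext j
  simp only [Finset.mem_filter, Finset.mem_univ, true_and]
  rcases eq_or_ne j i with rfl | hj
  · simp only [Function.update_self]
    constructor
    · intro _; exact hik
    · intro _
      have hm0 : (0:ℝ) ≤ (m:ℝ) := Nat.cast_nonneg m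
      have : (0:ℝ) ≤ (k:ℝ) * α := mul_nonneg (Nat.cast_nonneg k) hα
      exact div_nonneg this hm0
  · rw [Function.update_of_ne hj]

lemma one_le_bh_update (hm : 0 < m) (hα : 0 ≤ α) (i : Fin m) :
    1 ≤ bhRejections m α (Function.update pv i 0) := by
  refine le_bh ⟨hm, ?_⟩
  rw [Nat.succ_le_iff, Finset.card_pos]
  refine ⟨i, ?_⟩
  simp only [Finset.mem_filter, Finset.mem_univ, true_and, Function.update_self]
  have : (0:ℝ) ≤ (1:ℕ) * α := by simpa using hα
  exact div_nonneg this (Nat.cast_nonneg m)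

lemma bh_update_eq (hα : 0 ≤ α) (i : Fin m) (hpv : 0 ≤ pv i)
    (h : pv i ≤ (bhRejections m α (Function.update pv i 0)) * α / m) :
    bhRejections m α (Function.update pv i 0) = bhRejections m α pv := by
  have h1 : bhRejections m α pv ≤ bhRejections m α (Function.update pv i 0) := by
    refine bh_mono fun j => ?_
    rcases eq_or_ne j i with rfl | hj
    · simpa using hpv
    · rw [Function.update_of_ne hj]
  refine le_antisymm ?_ h1
  refine le_bh ⟨bh_le_m, ?_⟩
  rw [← count_update_eq hα i h]
  exact bh_le_count

lemma bh_update_iff (hα : 0 ≤ α) (i : Fin m) (hpv : 0 ≤ pv i) :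
    pv i ≤ (bhRejections m α pv) * α / m ↔
      pv i ≤ (bhRejections m α (Function.update pv i 0)) * α / m := by
  constructor
  · intro h
    refine h.trans ?_
    have h1 : bhRejections m α pv ≤ bhRejections m α (Function.update pv i 0) := by
      refine bh_mono fun j => ?_
      rcases eq_or_ne j i with rfl | hj
      · simpa using hpv
      · rw [Function.update_of_ne hj]
    gcongr
  · intro h
    rwa [← bh_update_eq hα i hpv h]

end BHAux

namespace BHAux

lemma measurable_bh {Ω' : Type*} [MeasurableSpace Ω'] (m : ℕ) (α : ℝ)
    {f : Ω' → (Fin m → ℝ)} (hf : Measurable f) :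
    Measurable fun ω => bhRejections m α (f ω) := by
  have hcnt : ∀ k : ℕ, Measurable fun ω =>
      (Finset.univ.filter fun i => f ω i ≤ (k : ℕ) * α / m).card := by
    intro k
    simp_rw [Finset.card_filter]
    refine Finset.measurable_sum _ fun i _ => ?_
    exact Measurable.ite
      (measurableSet_le ((measurable_pi_apply i).comp hf) measurable_const)
      measurable_const measurable_const
  have hset : ∀ k : ℕ, MeasurableSet {ω | k ∈ bhSet m α (f ω)} := by
    intro k
    have heq : {ω | k ∈ bhSet m α (f ω)} =
        {ω : Ω' | k ≤ m} ∩
          (fun ω => (Finset.univ.filter fun i => f ω i ≤ (k : ℕ) * α / m).card) ⁻¹'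
            {n | k ≤ n} := by
      ext ω
      simp [bhSet, Set.mem_setOf_eq]
    rw [heq]
    exact (MeasurableSet.const _).inter ((hcnt k) trivial)
  refine measurable_to_countable' fun n => ?_
  have heq : (fun ω => bhRejections m α (f ω)) ⁻¹' {n} =
      {ω | n ∈ bhSet m α (f ω)} ∩
        ⋂ k ∈ Finset.range (m + 1), {ω | k ∈ bhSet m α (f ω) → k ≤ n} := by
    ext ω
    simp only [Set.mem_preimage, Set.mem_singleton_iff, Set.mem_inter_iff,
      Set.mem_setOf_eq, Set.mem_iInter]
    constructor
    · rintro rfl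
      exact ⟨bh_mem, fun k _ hk => le_bh hk⟩
    · rintro ⟨hn, hub⟩
      refine le_antisymm ?_ (le_bh hn)
      refine csSup_le ⟨0, zero_mem⟩ fun k hk => hub k ?_ hk
      exact Finset.mem_range.mpr (Nat.lt_succ_of_le hk.1)
  rw [heq]
  refine (hset n).inter
    (MeasurableSet.biInter (Finset.range (m + 1)).countable_toSet fun k _ => ?_)
  by_cases hkn : k ≤ n
  · have : {ω : Ω' | k ∈ bhSet m α (f ω) → k ≤ n} = Set.univ := by
      ext ω; simp [hkn]
    rw [this]; exact MeasurableSet.univ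
  · have : {ω : Ω' | k ∈ bhSet m α (f ω) → k ≤ n} = {ω | k ∈ bhSet m α (f ω)}ᶜ := by
      ext ω; simp [hkn]
    rw [this]; exact (hset k).compl

end BHAux

namespace BHAux

lemma indep_aux {Ω : Type*} {m : ℕ} [MeasurableSpace Ω] (Pr : Measure Ω)
    [IsProbabilityMeasure Pr] (α : ℝ) (P : Fin m → Ω → ℝ)
    (hmeas : ∀ i, Measurable (P i))
    (hindep : iIndepFun P Pr) (i : Fin m) :
    IndepFun (P i)
      (fun ω => bhRejections m α (Function.update (fun j => P j ω) i 0)) Pr := by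
  classical
  set S : Finset (Fin m) := {i} with hS
  set T : Finset (Fin m) := {i}ᶜ with hT
  have hST : Disjoint S T := by simp [hS, hT]
  have h1 := hindep.indepFun_finset S T hST hmeas
  set φL : ((j : S) → ℝ) → ℝ := fun x => x ⟨i, Finset.mem_singleton_self i⟩ with hφLdef
  set φR : ((j : T) → ℝ) → ℕ :=
    fun x => bhRejections m α (fun j => if h : j ∈ T then x ⟨j, h⟩ else 0) with hφRdef
  have hφL : Measurable φL := measurable_pi_apply _
  have hφR : Measurable φR := by
    refine measurable_bh m α ?_
    refine measurable_pi_lambda _ fun j => ?_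
    by_cases h : j ∈ T
    · simp only [h, dif_pos]
      exact measurable_pi_apply _
    · simp only [h, dif_neg, not_false_iff]
      exact measurable_const
  have h2 := h1.comp hφL hφR
  have e1 : (φL ∘ fun a (j : S) => P (j : Fin m) a) = P i := rfl
  have e2 : (φR ∘ fun a (j : T) => P (j : Fin m) a) =
      fun ω => bhRejections m α (Function.update (fun j => P j ω) i 0) := by
    funext ω
    simp only [Function.comp_apply, hφRdef]
    congr 1
    funext j
    by_cases h : j ∈ T
    · have hj : j ≠ i := by simpa [hT] using h
      simp [h, Function.update_of_ne hj]
    · have hj : j = i := by simpa [hT] using h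
      subst hj
      simp [h]
  rw [← e1, ← e2]
  exact h2

lemma expectation_aux {Ω : Type*} [MeasurableSpace Ω] (Pr : Measure Ω)
    [IsProbabilityMeasure Pr] {m : ℕ} {α : ℝ} (hm : 0 < m) (hα0 : 0 < α) (hα1 : α ≤ 1)
    (g : Ω → ℕ) (hg : Measurable g) (hg1 : ∀ ω, 1 ≤ g ω) (hgm : ∀ ω, g ω ≤ m)
    (X : Ω → ℝ) (hX : Measurable X) (hindep : IndepFun X g Pr)
    (hXnull : Measure.map X Pr = volume.restrict (Set.Icc (0 : ℝ) 1)) :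
    ∑ k ∈ Finset.Icc 1 m,
      (k : ℝ)⁻¹ * (Pr (g ⁻¹' {k} ∩ X ⁻¹' Set.Iic ((k : ℕ) * α / m))).toReal = α / m := by
  have hm' : (0:ℝ) < (m:ℝ) := by exact_mod_cast hm
  have hPrX : ∀ c : ℝ, 0 ≤ c → c ≤ 1 → Pr (X ⁻¹' Set.Iic c) = ENNReal.ofReal c := by
    intro c hc0 hc1
    have h1 : Pr (X ⁻¹' Set.Iic c) = Measure.map X Pr (Set.Iic c) :=
      (Measure.map_apply hX measurableSet_Iic).symm
    rw [h1, hXnull, Measure.restrict_apply measurableSet_Iic]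
    have h2 : Set.Iic c ∩ Set.Icc (0:ℝ) 1 = Set.Icc 0 c := by
      ext x
      simp only [Set.mem_inter_iff, Set.mem_Iic, Set.mem_Icc]
      constructor
      · rintro ⟨h3, h4, _⟩; exact ⟨h4, h3⟩
      · rintro ⟨h4, h3⟩; exact ⟨h3, h4, h3.trans hc1⟩
    rw [h2, Real.volume_Icc, sub_zero]
  have hterm : ∀ k ∈ Finset.Icc 1 m,
      (k : ℝ)⁻¹ * (Pr (g ⁻¹' {k} ∩ X ⁻¹' Set.Iic ((k : ℕ) * α / m))).toReal
        = (α / m) * (Pr (g ⁻¹' {k})).toReal := by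
    intro k hk
    rw [Finset.mem_Icc] at hk
    have hk1 : (1:ℝ) ≤ (k:ℝ) := by exact_mod_cast hk.1
    have hk0 : (k:ℝ) ≠ 0 := by linarith
    have hc0 : (0:ℝ) ≤ (k:ℝ) * α / m := by positivity
    have hc1 : (k:ℝ) * α / m ≤ 1 := by
      have hkm : (k:ℝ) ≤ (m:ℝ) := by exact_mod_cast hk.2
      have : (k:ℝ) * α ≤ (m:ℝ) * 1 := by nlinarith
      rw [div_le_one hm']
      linarith
    rw [hindep.symm.measure_inter_preimage_eq_mul _ _ (measurableSet_singleton k)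
      measurableSet_Iic, hPrX _ hc0 hc1, ENNReal.toReal_mul,
      ENNReal.toReal_ofReal hc0]
    field_simp
  rw [Finset.sum_congr rfl hterm, ← Finset.mul_sum]
  have hsum : ∑ k ∈ Finset.Icc 1 m, Pr (g ⁻¹' {k}) = 1 := by
    have hdisj : (↑(Finset.Icc 1 m) : Set ℕ).PairwiseDisjoint fun k => g ⁻¹' {k} := by
      intro a _ b _ hab
      refine Set.disjoint_left.mpr fun ω h1 h2 => hab ?_
      simp only [Set.mem_preimage, Set.mem_singleton_iff] at h1 h2
      rw [← h1, ← h2]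
    rw [← measure_biUnion_finset hdisj fun k _ => hg (measurableSet_singleton k)]
    have huniv : ⋃ k ∈ Finset.Icc 1 m, g ⁻¹' {k} = Set.univ := by
      ext ω
      simp only [Set.mem_iUnion, Set.mem_preimage, Set.mem_singleton_iff,
        Finset.mem_Icc, Set.mem_univ, iff_true]
      exact ⟨g ω, ⟨hg1 ω, hgm ω⟩, rfl⟩
    rw [huniv, measure_univ]
  rw [← ENNReal.toReal_sum fun k _ => measure_ne_top Pr _, hsum]
  simp

end BHAux

namespace BHAux

lemma pointwise_aux {m : ℕ} {α : ℝ} (hm : 0 < m) (hα0 : 0 < α) (pv : Fin m → ℝ)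
    (hpv : ∀ i, 0 ≤ pv i) (i : Fin m) :
    (if pv i ≤ (bhRejections m α pv) * α / m then (1 : ℝ) else 0) /
        ((max (bhRejections m α pv) 1 : ℕ) : ℝ)
      = ∑ k ∈ Finset.Icc 1 m,
          if bhRejections m α (Function.update pv i 0) = k ∧ pv i ≤ (k : ℕ) * α / m
          then (k : ℝ)⁻¹ else 0 := by
  set r' := bhRejections m α (Function.update pv i 0) with hr'
  have hr1 : 1 ≤ r' := one_le_bh_update hm hα0.le i
  have hrm : r' ≤ m := bh_le_m
  have hiff := bh_update_iff (α := α) hα0.le i (hpv i)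
  by_cases hev : pv i ≤ (r' : ℕ) * α / m
  · have hre : r' = bhRejections m α pv := bh_update_eq hα0.le i (hpv i) hev
    have hmax : max (bhRejections m α pv) 1 = r' := by
      rw [← hre]; exact max_eq_left hr1
    rw [if_pos (hiff.mpr hev), hmax,
      Finset.sum_eq_single_of_mem r' (Finset.mem_Icc.mpr ⟨hr1, hrm⟩)
        (fun k _ hne => by
          rw [if_neg]
          rintro ⟨h1, -⟩
          exact hne h1.symm),
      if_pos ⟨rfl, hev⟩, one_div]
  · rw [if_neg (fun h => hev (hiff.mp h)), zero_div]
    symm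
    refine Finset.sum_eq_zero fun k _ => ?_
    rw [if_neg]
    rintro ⟨h1, h2⟩
    rw [← h1] at h2
    exact hev h2

end BHAux


open BHAux

/-- Benjamini–Hochberg FDR control: with independent p-values whose null members are
uniform on `[0,1]`, the BH procedure at level `α` satisfies
`E[V / max(R,1)] ≤ (p₀/p)·α ≤ α`. -/
theorem benjamini_hochberg_fdr_control
    {Ω : Type*} {m : ℕ} [MeasurableSpace Ω] (Pr : Measure Ω) [IsProbabilityMeasure Pr]
    (hm : 0 < m) (α : ℝ) (hα0 : 0 < α) (hα1 : α ≤ 1)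
    (P : Fin m → Ω → ℝ) (hmeas : ∀ i, Measurable (P i))
    (hrange : ∀ i ω, P i ω ∈ Set.Icc (0 : ℝ) 1)
    (hindep : iIndepFun P Pr)
    (H0 : Finset (Fin m)) (p0 : ℕ) (hp0 : H0.card = p0)
    (hnull : ∀ i ∈ H0,
      Measure.map (P i) Pr = volume.restrict (Set.Icc (0 : ℝ) 1)) :
    (∫ ω,
        (((H0.filter fun i =>
              P i ω ≤ (bhRejections m α fun i => P i ω) * α / m).card : ℝ) /
          ((max (bhRejections m α fun i => P i ω) 1 : ℕ) : ℝ)) ∂Pr)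
        ≤ ((p0 : ℝ) / m) * α ∧
      ((p0 : ℝ) / m) * α ≤ α := by
  classical
  have hm' : (0:ℝ) < (m:ℝ) := by exact_mod_cast hm
  have hp0m : (p0:ℝ) ≤ (m:ℝ) := by
    have h1 : p0 ≤ m := by
      rw [← hp0]
      simpa using Finset.card_le_univ H0
    exact_mod_cast h1
  constructor
  · -- main FDR bound
    set g : Fin m → Ω → ℕ :=
      fun i ω => bhRejections m α (Function.update (fun j => P j ω) i 0) with hgdef
    have hgmeas : ∀ i, Measurable (g i) := by
      intro i
      refine measurable_bh m α ?_
      refine measurable_pi_lambda _ fun j => ?_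
      by_cases h : j = i
      · subst h
        simp only [Function.update_self]
        exact measurable_const
      · simp only [Function.update_of_ne h]
        exact hmeas j
    set A : Fin m → ℕ → Set Ω :=
      fun i k => g i ⁻¹' {k} ∩ P i ⁻¹' Set.Iic ((k : ℕ) * α / m) with hAdef
    have hAmeas : ∀ i k, MeasurableSet (A i k) := fun i k =>
      ((hgmeas i) (measurableSet_singleton k)).inter ((hmeas i) measurableSet_Iic)
    have hint : ∀ i k, Integrable ((A i k).indicator fun _ => (k : ℝ)⁻¹) Pr :=
      fun i k => (integrable_const _).indicator (hAmeas i k)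
    have hpt : ∀ ω : Ω,
        (((H0.filter fun i =>
              P i ω ≤ (bhRejections m α fun i => P i ω) * α / m).card : ℝ) /
          ((max (bhRejections m α fun i => P i ω) 1 : ℕ) : ℝ))
          = ∑ i ∈ H0, ∑ k ∈ Finset.Icc 1 m,
              (A i k).indicator (fun _ => (k : ℝ)⁻¹) ω := by
      intro ω
      have hcard : ((H0.filter fun i =>
            P i ω ≤ (bhRejections m α fun i => P i ω) * α / m).card : ℝ)
          = ∑ i ∈ H0,
              if P i ω ≤ (bhRejections m α fun i => P i ω) * α / m then (1:ℝ) else 0 := by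
        rw [Finset.card_filter]
        push_cast
        rfl
      rw [hcard, Finset.sum_div]
      refine Finset.sum_congr rfl fun i _ => ?_
      have hpa := pointwise_aux hm hα0 (fun j => P j ω) (fun j => (hrange j ω).1) i
      rw [hpa]
      refine Finset.sum_congr rfl fun k _ => ?_
      have hmem : ω ∈ A i k ↔
          (bhRejections m α (Function.update (fun j => P j ω) i 0) = k ∧
            P i ω ≤ (k : ℕ) * α / m) := by
        simp [hAdef, hgdef, Set.mem_inter_iff, Set.mem_preimage, Set.mem_singleton_iff,
          Set.mem_Iic]
      rw [Set.indicator_apply, if_congr hmem.symm rfl rfl]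
    have hind : ∀ i, IndepFun (P i) (g i) Pr := fun i =>
      indep_aux Pr α P hmeas hindep i
    have hexp : ∀ i ∈ H0,
        ∑ k ∈ Finset.Icc 1 m, (k : ℝ)⁻¹ * (Pr (A i k)).toReal = α / m := by
      intro i hi
      simp only [hAdef]
      exact expectation_aux Pr hm hα0 hα1 (g i) (hgmeas i)
        (fun ω => one_le_bh_update hm hα0.le i)
        (fun ω => bh_le_m) (P i) (hmeas i) (hind i) (hnull i hi)
    calc
      (∫ ω,
          (((H0.filter fun i =>
                P i ω ≤ (bhRejections m α fun i => P i ω) * α / m).card : ℝ) /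
            ((max (bhRejections m α fun i => P i ω) 1 : ℕ) : ℝ)) ∂Pr)
          = ∫ ω, (∑ i ∈ H0, ∑ k ∈ Finset.Icc 1 m,
              (A i k).indicator (fun _ => (k : ℝ)⁻¹) ω) ∂Pr :=
        integral_congr_ae (Filter.Eventually.of_forall hpt)
      _ = ∑ i ∈ H0, ∫ ω, (∑ k ∈ Finset.Icc 1 m,
              (A i k).indicator (fun _ => (k : ℝ)⁻¹) ω) ∂Pr :=
        integral_finset_sum _ fun i _ => integrable_finset_sum _ fun k _ => hint i k
      _ = ∑ i ∈ H0, ∑ k ∈ Finset.Icc 1 m,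
            ∫ ω, (A i k).indicator (fun _ => (k : ℝ)⁻¹) ω ∂Pr :=
        Finset.sum_congr rfl fun i _ => integral_finset_sum _ fun k _ => hint i k
      _ = ∑ i ∈ H0, ∑ k ∈ Finset.Icc 1 m, (k : ℝ)⁻¹ * (Pr (A i k)).toReal := by
        refine Finset.sum_congr rfl fun i _ => Finset.sum_congr rfl fun k _ => ?_
        rw [integral_indicator_const _ (hAmeas i k), smul_eq_mul, mul_comm, measureReal_def]
      _ = ∑ _i ∈ H0, α / m := Finset.sum_congr rfl hexp
      _ = (p0 : ℝ) * (α / m) := by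
        rw [Finset.sum_const, hp0, nsmul_eq_mul]
      _ ≤ ((p0 : ℝ) / m) * α := by
        rw [div_mul_eq_mul_div, mul_div_assoc]
  · have h1 : (p0 : ℝ) / m ≤ 1 := (div_le_one hm').mpr hp0m
    calc ((p0 : ℝ) / m) * α ≤ 1 * α := by nlinarith
      _ = α := one_mul α
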